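/- Let n = v ⊕ z be a generalized Heisenberg algebra, V ∈ v and Y ∈ z nonzero, and K = K_{V,Y} the operator on z ∩ Y^⊥ defined by K X = ‖V‖⁻²‖Y‖⁻¹[V, J_X J_Y V]. For X ∈ z ∩ Y^⊥: K²X = -X if and only if J_X J_Y V = ‖Y‖ J_{KX} V. -/

import Mathlib

open scoped RealInnerProductSpace

section Aux

variable {v z : Type*} [NormedAddCommGroup v] [InnerProductSpace ℝ v]
    [NormedAddCommGroup z] [InnerProductSpace ℝ z]

lemma aux_br_antisymm (br : v →ₗ[ℝ] v →ₗ[ℝ] z) (halt : ∀ U : v, br U U = 0)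
    (a b : v) : br a b = - br b a := by
  have h := halt (a + b)
  simp only [map_add, LinearMap.add_apply, halt a, halt b, zero_add, add_zero] at h
  rw [add_comm] at h
  exact eq_neg_of_add_eq_zero_left h

lemma aux_J_skew (br : v →ₗ[ℝ] v →ₗ[ℝ] z) (halt : ∀ U : v, br U U = 0)
    (J : z → v →ₗ[ℝ] v) (hJdef : ∀ (Z : z) (U W : v), ⟪J Z U, W⟫ = ⟪br U W, Z⟫)
    (Z : z) (a b : v) : ⟪J Z a, b⟫ = -⟪J Z b, a⟫ := by
  rw [hJdef, hJdef, aux_br_antisymm br halt a b, inner_neg_left]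

lemma aux_J_self (J : z → v →ₗ[ℝ] v)
    (hCl : ∀ Z : z, (J Z) ∘ₗ (J Z) = -(‖Z‖^2 : ℝ) • LinearMap.id)
    (Z : z) (a : v) : J Z (J Z a) = -((‖Z‖^2 : ℝ) • a) := by
  have := LinearMap.ext_iff.mp (hCl Z) a
  simpa using this

lemma aux_J_add (br : v →ₗ[ℝ] v →ₗ[ℝ] z)
    (J : z → v →ₗ[ℝ] v) (hJdef : ∀ (Z : z) (U W : v), ⟪J Z U, W⟫ = ⟪br U W, Z⟫)
    (Z Z' : z) (a : v) : J (Z + Z') a = J Z a + J Z' a := by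
  apply ext_inner_right ℝ
  intro w
  rw [hJdef, inner_add_left, inner_add_right, hJdef, hJdef]

lemma aux_J_anticomm (br : v →ₗ[ℝ] v →ₗ[ℝ] z)
    (J : z → v →ₗ[ℝ] v) (hJdef : ∀ (Z : z) (U W : v), ⟪J Z U, W⟫ = ⟪br U W, Z⟫)
    (hCl : ∀ Z : z, (J Z) ∘ₗ (J Z) = -(‖Z‖^2 : ℝ) • LinearMap.id)
    (Z Z' : z) (a : v) :
    J Z (J Z' a) = - J Z' (J Z a) - (2 * ⟪Z, Z'⟫) • a := by
  have h := aux_J_self J hCl (Z + Z') a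
  rw [aux_J_add br J hJdef, aux_J_add br J hJdef Z Z' a, map_add, map_add,
    aux_J_self J hCl Z a, aux_J_self J hCl Z' a, norm_add_sq_real] at h
  have hs : ((‖Z‖ ^ 2 + 2 * ⟪Z, Z'⟫ + ‖Z'‖ ^ 2 : ℝ)) • a
      = (‖Z‖^2 : ℝ) • a + (2 * ⟪Z, Z'⟫) • a + (‖Z'‖^2 : ℝ) • a := by
    rw [← add_smul, ← add_smul]
  linear_combination (norm := module) h - congrArg Neg.neg hs

lemma aux_inner_JJ (br : v →ₗ[ℝ] v →ₗ[ℝ] z) (halt : ∀ U : v, br U U = 0)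
    (J : z → v →ₗ[ℝ] v) (hJdef : ∀ (Z : z) (U W : v), ⟪J Z U, W⟫ = ⟪br U W, Z⟫)
    (hCl : ∀ Z : z, (J Z) ∘ₗ (J Z) = -(‖Z‖^2 : ℝ) • LinearMap.id)
    (Z Z' : z) (a : v) : ⟪J Z a, J Z' a⟫ = ⟪Z, Z'⟫ * ‖a‖^2 := by
  have hA : ⟪J Z a, J Z' a⟫ = -⟪a, J Z (J Z' a)⟫ := by
    rw [aux_J_skew br halt J hJdef Z a (J Z' a), real_inner_comm (J Z (J Z' a)) a]
  have hB : ⟪J Z' a, J Z a⟫ = -⟪a, J Z' (J Z a)⟫ := by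
    rw [aux_J_skew br halt J hJdef Z' a (J Z a), real_inner_comm (J Z' (J Z a)) a]
  have hC : ⟪a, J Z (J Z' a)⟫ + ⟪a, J Z' (J Z a)⟫ = -(2 * ⟪Z, Z'⟫) * ‖a‖^2 := by
    rw [← inner_add_right]
    have hsum : J Z (J Z' a) + J Z' (J Z a) = -((2 * ⟪Z, Z'⟫) • a) := by
      rw [aux_J_anticomm br J hJdef hCl Z Z' a]
      abel
    rw [hsum, inner_neg_right, real_inner_smul_right, real_inner_self_eq_norm_sq]
    ring
  have hsymm : ⟪J Z a, J Z' a⟫ = ⟪J Z' a, J Z a⟫ := real_inner_comm _ _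
  linarith

lemma aux_norm_J (br : v →ₗ[ℝ] v →ₗ[ℝ] z) (halt : ∀ U : v, br U U = 0)
    (J : z → v →ₗ[ℝ] v) (hJdef : ∀ (Z : z) (U W : v), ⟪J Z U, W⟫ = ⟪br U W, Z⟫)
    (hCl : ∀ Z : z, (J Z) ∘ₗ (J Z) = -(‖Z‖^2 : ℝ) • LinearMap.id)
    (Z : z) (a : v) : ‖J Z a‖ = ‖Z‖ * ‖a‖ := by
  have h := aux_inner_JJ br halt J hJdef hCl Z Z a
  rw [real_inner_self_eq_norm_sq, real_inner_self_eq_norm_sq] at h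
  nlinarith [norm_nonneg (J Z a), norm_nonneg Z, norm_nonneg a,
    mul_nonneg (norm_nonneg Z) (norm_nonneg a)]

end Aux

theorem stmt18 {v z : Type*} [NormedAddCommGroup v] [InnerProductSpace ℝ v]
    [NormedAddCommGroup z] [InnerProductSpace ℝ z]
    (br : v →ₗ[ℝ] v →ₗ[ℝ] z)
    (halt : ∀ U : v, br U U = 0)
    (J : z → v →ₗ[ℝ] v)
    (hJdef : ∀ (Z : z) (U W : v), ⟪J Z U, W⟫ = ⟪br U W, Z⟫)
    (hCl : ∀ Z : z, (J Z) ∘ₗ (J Z) = -(‖Z‖^2 : ℝ) • LinearMap.id)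
    (V : v) (Y : z) (hV : V ≠ 0) (hY : Y ≠ 0)
    (K : z → z)
    (hK : ∀ X : z, K X = ((‖V‖^2)⁻¹ * ‖Y‖⁻¹) • br V (J X (J Y V)))
    (X : z) (hXY : ⟪X, Y⟫ = 0) :
    K (K X) = -X ↔ J X (J Y V) = ‖Y‖ • J (K X) V := by
  have hVn : ‖V‖ ≠ 0 := norm_ne_zero_iff.mpr hV
  have hYn : ‖Y‖ ≠ 0 := norm_ne_zero_iff.mpr hY
  have hVp : (0:ℝ) < ‖V‖ := norm_pos_iff.mpr hV
  have hYp : (0:ℝ) < ‖Y‖ := norm_pos_iff.mpr hY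
  set c : ℝ := (‖V‖^2)⁻¹ * ‖Y‖⁻¹ with hc
  have hcpos : 0 < c := by positivity
  -- key inner-product formula for K
  have hKinner : ∀ (U Z : z), ⟪K U, Z⟫ = c * ⟪J Z V, J U (J Y V)⟫ := by
    intro U Z
    rw [hK U, real_inner_smul_left, hJdef Z V (J U (J Y V))]
  have hinnJJ := aux_inner_JJ br halt J hJdef hCl
  have hnormJ := aux_norm_J br halt J hJdef hCl
  have hskew := aux_J_skew br halt J hJdef
  have hanti := aux_J_anticomm br J hJdef hCl
  -- contraction: ‖K U‖ ≤ ‖U‖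
  have hKle : ∀ U : z, ‖K U‖ ≤ ‖U‖ := by
    intro U
    have h1 : ‖K U‖^2 = c * ⟪J (K U) V, J U (J Y V)⟫ := by
      rw [← real_inner_self_eq_norm_sq, hKinner U (K U)]
    have h2 : ⟪J (K U) V, J U (J Y V)⟫ ≤ ‖K U‖ * ‖V‖ * (‖U‖ * (‖Y‖ * ‖V‖)) := by
      have := real_inner_le_norm (J (K U) V) (J U (J Y V))
      rwa [hnormJ (K U) V, hnormJ U (J Y V), hnormJ Y V] at this
    have h3 : ‖K U‖^2 ≤ ‖K U‖ * ‖U‖ := by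
      have := mul_le_mul_of_nonneg_left h2 hcpos.le
      rw [← h1] at this
      have hcc : c * (‖K U‖ * ‖V‖ * (‖U‖ * (‖Y‖ * ‖V‖))) = ‖K U‖ * ‖U‖ := by
        rw [hc]
        field_simp
      linarith [hcc ▸ this]
    nlinarith [norm_nonneg (K U), norm_nonneg U]
  constructor
  · -- forward direction
    intro h
    -- ‖K X‖ = ‖X‖
    have hX2 : ⟪K (K X), X⟫ = -‖X‖^2 := by
      rw [h, inner_neg_left, real_inner_self_eq_norm_sq]
    have hcs : -⟪K (K X), X⟫ ≤ ‖K (K X)‖ * ‖X‖ := by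
      have := abs_real_inner_le_norm (K (K X)) X
      have := neg_abs_le ⟪K (K X), X⟫
      linarith
    have hKKle : ‖K (K X)‖ ≤ ‖K X‖ := hKle (K X)
    have hKXle : ‖K X‖ ≤ ‖X‖ := hKle X
    have hXle : ‖X‖^2 ≤ ‖K X‖ * ‖X‖ := by
      rw [hX2] at hcs
      nlinarith [norm_nonneg X]
    have hKXeq : ‖K X‖ = ‖X‖ := by
      nlinarith [norm_nonneg X, norm_nonneg (K X)]
    -- perpendicularity of D to J Z V
    have hJKV : ∀ Z : z, ⟪J (K X) V, J Z V⟫ = ‖Y‖⁻¹ * ⟪J Z V, J X (J Y V)⟫ := by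
      intro Z
      rw [hinnJJ (K X) Z V, hKinner X Z]
      rw [hc]
      field_simp
    set D : v := ‖Y‖ • J (K X) V - J X (J Y V) with hD
    have hDperp : ∀ Z : z, ⟪D, J Z V⟫ = 0 := by
      intro Z
      rw [hD, inner_sub_left, real_inner_smul_left, hJKV Z,
        real_inner_comm (J X (J Y V)) (J Z V)]
      field_simp
      ring
    have e1 : ⟪J (K X) V, J X (J Y V)⟫ = ‖V‖^2 * ‖Y‖ * ‖K X‖^2 := by
      have := hKinner X (K X)
      rw [real_inner_self_eq_norm_sq] at this
      rw [hc] at this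
      field_simp at this
      linarith
    have e2 : ⟪J X (J Y V), J X (J Y V)⟫ = ‖X‖^2 * (‖Y‖^2 * ‖V‖^2) := by
      rw [hinnJJ X X (J Y V), real_inner_self_eq_norm_sq, hnormJ Y V]
      ring
    have hDzero : D = 0 := by
      rw [← inner_self_eq_zero (𝕜 := ℝ)]
      have hdd : ⟪D, D⟫ = ⟪D, ‖Y‖ • J (K X) V⟫ - ⟪D, J X (J Y V)⟫ := by
        rw [hD]; rw [inner_sub_right]
      rw [hdd, real_inner_smul_right, hDperp (K X), mul_zero, hD, inner_sub_left,
        real_inner_smul_left, e1, e2, hKXeq]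
      ring
    have := sub_eq_zero.mp hDzero
    exact this.symm
  · -- backward direction
    intro h
    have hKXY : ⟪K X, Y⟫ = 0 := by
      rw [hKinner X Y]
      have : ⟪J Y V, J X (J Y V)⟫ = 0 := by
        rw [real_inner_comm, hskew X (J Y V) (J Y V)]
        linarith [hskew X (J Y V) (J Y V)]
      rw [this, mul_zero]
    have hJKXV : J (K X) V = ‖Y‖⁻¹ • J X (J Y V) := by
      rw [h, smul_smul, inv_mul_cancel₀ hYn, one_smul]
    have hYX : ⟪Y, X⟫ = 0 := by rw [real_inner_comm]; exact hXY
    have hJYW : J Y (J X (J Y V)) = (‖Y‖^2 : ℝ) • J X V := by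
      rw [hanti Y X (J Y V), aux_J_self J hCl Y V, hYX]
      simp [map_neg, map_smul]
    have hkey : J (K X) (J Y V) = -(‖Y‖ • J X V) := by
      rw [hanti (K X) Y V, hKXY, hJKXV, map_smul, hJYW, smul_smul]
      have hss : ‖Y‖⁻¹ * ‖Y‖^2 = ‖Y‖ := by field_simp
      rw [hss]
      simp
    apply ext_inner_right ℝ
    intro Z
    rw [hKinner (K X) Z, hkey, inner_neg_right, real_inner_smul_right,
      hinnJJ Z X V, inner_neg_left, real_inner_comm X Z]
    rw [hc]
    field_simp
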